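/- Let H be a connected linear r-uniform hypergraph (r ≥ 2) whose edges are 2-colored with colors 1 and 2, with at least one edge of each color. If the subhypergraph H_1 of color-1 edges has average degree at least r(r−1)(p−1)+2r, then H contains a linear path of length at least p whose first edge has color 2 and whose remaining edges all have color 1. -/

import Mathlib

/-- The shadow graph of a hypergraph. -/
def shadowGraph {V : Type*} (E : Finset (Finset V)) : SimpleGraph V where
  Adj u v := u ≠ v ∧ ∃ e ∈ E, u ∈ e ∧ v ∈ e
  symm := by
    constructor; intro u v ⟨huv, e, he, hu, hv⟩
    exact ⟨huv.symm, e, he, hv, hu⟩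
  loopless := by constructor; intro v ⟨h, _⟩; exact h rfl

/-- A linear path of length ℓ in a hypergraph with edge set E. -/
def IsLinearPath {V : Type*} [DecidableEq V] (E : Finset (Finset V))
    (ℓ : ℕ) (e : ℕ → Finset V) : Prop :=
  (∀ i < ℓ, e i ∈ E) ∧
  (∀ i j, i < j → j < ℓ → e i ≠ e j) ∧
  (∀ i, i + 1 < ℓ → (e i ∩ e (i + 1)).card = 1) ∧
  (∀ i j, i + 2 ≤ j → j < ℓ → e i ∩ e j = ∅)



section helpers
variable {V : Type*} [DecidableEq V]

lemma two_le_card_pair {a b : V} {s : Finset V} (ha : a ∈ s) (hb : b ∈ s) (h : a ≠ b) :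
    2 ≤ s.card := by
  have hsub : ({a, b} : Finset V) ⊆ s := by
    intro x hx; simp only [Finset.mem_insert, Finset.mem_singleton] at hx
    rcases hx with rfl | rfl <;> assumption
  have := Finset.card_le_card hsub
  rwa [Finset.card_pair h] at this

lemma mindeg_extract (k : ℕ) (F : Finset (Finset V))
    (hF : (k - 1) * (F.biUnion id).card < F.card) :
    ∃ G, G ⊆ F ∧ G.Nonempty ∧ ∀ v ∈ G.biUnion id, k ≤ (G.filter (fun f => v ∈ f)).card := by
  induction F using Finset.strongInduction with
  | _ F ih =>
    by_cases h : ∀ v ∈ F.biUnion id, k ≤ (F.filter (fun f => v ∈ f)).card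
    · exact ⟨F, Finset.Subset.refl F, Finset.card_pos.mp (lt_of_le_of_lt (Nat.zero_le _) hF), h⟩
    · push_neg at h
      obtain ⟨v, hv, hdv⟩ := h
      obtain ⟨f0, hf0F, hvf0⟩ := Finset.mem_biUnion.mp hv
      set F' := F.filter (fun f => v ∉ f) with hF'def
      have hss : F' ⊂ F := by
        refine Finset.ssubset_iff_of_subset (Finset.filter_subset _ _) |>.mpr ?_
        refine ⟨f0, hf0F, ?_⟩
        simp only [hF'def, Finset.mem_filter]
        exact fun h => h.2 hvf0
      have hcards : F'.card + (F.filter (fun f => v ∈ f)).card = F.card := by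
        rw [hF'def]
        have := Finset.card_filter_add_card_filter_not
          (s := F) (p := fun f => v ∈ f)
        exact (add_comm _ _).trans this
      have hm : 1 ≤ (F.biUnion id).card := Finset.card_pos.mpr ⟨v, hv⟩
      have hVsub : F'.biUnion id ⊆ (F.biUnion id).erase v := by
        intro w hw
        obtain ⟨f, hfF', hwf⟩ := Finset.mem_biUnion.mp hw
        have hfF := Finset.mem_filter.mp hfF'
        refine Finset.mem_erase.mpr ⟨?_, Finset.mem_biUnion.mpr ⟨f, hfF.1, hwf⟩⟩
        rintro rfl; exact hfF.2 hwf
      have hVcard : (F'.biUnion id).card ≤ (F.biUnion id).card - 1 := by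
        have := Finset.card_le_card hVsub
        rwa [Finset.card_erase_of_mem hv] at this
      have hF' : (k - 1) * (F'.biUnion id).card < F'.card := by
        have h1 : (k - 1) * (F'.biUnion id).card ≤ (k - 1) * ((F.biUnion id).card - 1) :=
          Nat.mul_le_mul_left _ hVcard
        have h2 : (k - 1) * ((F.biUnion id).card - 1) + (k-1) = (k-1) * (F.biUnion id).card := by
          have : (F.biUnion id).card - 1 + 1 = (F.biUnion id).card := Nat.succ_pred_eq_of_pos hm
          calc (k - 1) * ((F.biUnion id).card - 1) + (k-1)
              = (k-1) * ((F.biUnion id).card - 1 + 1) := by ring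
            _ = (k-1) * (F.biUnion id).card := by rw [this]
        omega
      obtain ⟨G, hG1, hG2, hG3⟩ := ih F' hss hF'
      exact ⟨G, hG1.trans (Finset.filter_subset _ _), hG2, hG3⟩

end helpers

section chains
variable {V : Type*} [DecidableEq V] {E : Finset (Finset V)}

lemma chain_of_walk {u w : V} (q : (shadowGraph E).Walk u w) :
    ∀ a ∈ E, u ∈ a → ∃ (s : ℕ) (g : ℕ → Finset V), g 0 = a ∧ (∀ i ≤ s, g i ∈ E) ∧
      (∀ i < s, (g i ∩ g (i+1)).Nonempty) ∧ w ∈ g s := by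
  induction q with
  | nil =>
    intro a ha hu
    exact ⟨0, fun _ => a, rfl, fun i _ => ha, fun i h => absurd h (Nat.not_lt_zero i), hu⟩
  | @cons u x w h q ih =>
    intro a ha hu
    obtain ⟨hne, e, he, hu', hx⟩ := h
    obtain ⟨s, g, hg0, hgE, hgch, hgw⟩ := ih e he hx
    refine ⟨s + 1, fun n => if n = 0 then a else g (n - 1), by simp, ?_, ?_, ?_⟩
    · intro i hi
      by_cases h0 : i = 0
      · simp [h0, ha]
      · simp only [h0, if_false]
        exact hgE _ (by omega)
    · intro i hi
      by_cases h0 : i = 0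
      · subst h0
        have : ((fun n => if n = 0 then a else g (n - 1)) 0 ∩ (fun n => if n = 0 then a else g (n - 1)) (0 + 1)) = a ∩ g 0 := by norm_num
        rw [this]
        exact ⟨u, Finset.mem_inter.mpr ⟨hu, by simpa [hg0] using hu'⟩⟩
      · simp only [h0, if_false, Nat.succ_ne_zero, if_neg (by omega : i + 1 ≠ 0)]
        have : i - 1 + 1 = i + 1 - 1 := by omega
        rw [← this]
        exact hgch _ (by omega)
    · simp only [Nat.succ_ne_zero, if_neg (by omega : s + 1 ≠ 0), Nat.add_sub_cancel]
      exact hgw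

end chains


section chains
variable {V : Type*} [DecidableEq V]

def ChainP (E : Finset (Finset V)) (c : Finset V → Bool) (VF : Finset V)
    (s : ℕ) (g : ℕ → Finset V) : Prop :=
  (∀ i ≤ s, g i ∈ E) ∧ c (g 0) = false ∧ (∀ i < s, (g i ∩ g (i+1)).Nonempty) ∧
    (g s ∩ VF).Nonempty

lemma min_chain (E : Finset (Finset V)) (c : Finset V → Bool) (VF : Finset V) :
    ∀ s, ∀ g, ChainP E c VF s g →
    ∃ s' g', s' ≤ s ∧ ChainP E c VF s' g' ∧
      (∀ i < s', c (g' (i+1)) = true) ∧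
      (∀ i j, i + 2 ≤ j → j ≤ s' → g' i ∩ g' j = ∅) ∧
      (∀ i < s', g' i ≠ g' (i+1)) ∧
      (∀ m, s' = m + 1 → g' m ∩ VF = ∅) := by
  intro s
  induction s using Nat.strong_induction_on with
  | _ s ih =>
  intro g hg
  obtain ⟨hgE, hg0, hgch, hglast⟩ := hg
  by_cases hA : ∀ i < s, c (g (i+1)) = true
  · by_cases hB : ∀ i j, i + 2 ≤ j → j ≤ s → g i ∩ g j = ∅
    · by_cases hC : ∀ i < s, g i ≠ g (i+1)
      · by_cases hD : ∀ m, s = m + 1 → g m ∩ VF = ∅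
        · exact ⟨s, g, le_rfl, ⟨hgE, hg0, hgch, hglast⟩, hA, hB, hC, hD⟩
        · -- truncate last edge
          push_neg at hD
          obtain ⟨m, hm, hmne⟩ := hD
          obtain ⟨w, hw⟩ := hmne
          obtain ⟨s', g', h1, h2⟩ := ih m (by omega) g
            ⟨fun t ht => hgE _ (by omega), hg0, fun t ht => hgch t (by omega), ⟨w, hw⟩⟩
          exact ⟨s', g', by omega, h2⟩
      · -- merge equal consecutive edges
        push_neg at hC
        obtain ⟨i, hi, heq⟩ := hC
        rcases Nat.lt_or_ge (i+1) s with h | h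
        · obtain ⟨b, hb⟩ : ∃ b, s = i + 2 + b := ⟨s - (i+2), by omega⟩
          set g' : ℕ → Finset V := fun t => if t ≤ i then g t else g (t+1) with hg'def
          have hg'e : ∀ t, g' t = if t ≤ i then g t else g (t+1) := fun _ => rfl
          have : ChainP E c VF (i+1+b) g' := by
            refine ⟨?_, ?_, ?_, ?_⟩
            · intro t ht; rw [hg'e]; split
              · exact hgE _ (by omega)
              · exact hgE _ (by omega)
            · rw [hg'e, if_pos (Nat.zero_le i)]; exact hg0
            · intro t ht
              rcases lt_trichotomy t i with h' | h' | h'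
              · rw [hg'e, hg'e, if_pos (le_of_lt h'), if_pos (by omega)]
                exact hgch t (by omega)
              · subst h'
                rw [hg'e, hg'e, if_pos (le_refl t), if_neg (by omega), heq]
                exact hgch (t+1) (by omega)
              · rw [hg'e, hg'e, if_neg (by omega), if_neg (by omega)]
                exact hgch (t+1) (by omega)
            · have hx : i + 1 + b + 1 = s := by omega
              rw [hg'e, if_neg (by omega), hx]
              exact hglast
          obtain ⟨s', g'', h1, h2⟩ := ih (i+1+b) (by omega) g' this
          exact ⟨s', g'', by omega, h2⟩
        · -- i + 1 = s : truncate to i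
          have hs : s = i + 1 := by omega
          have hlast' : (g i ∩ VF).Nonempty := by
            rw [heq, ← hs]; exact hglast
          obtain ⟨s', g', h1, h2⟩ := ih i (by omega) g
            ⟨fun t ht => hgE _ (by omega), hg0, fun t ht => hgch t (by omega), hlast'⟩
          exact ⟨s', g', by omega, h2⟩
    · -- shortcut between far-apart intersecting edges
      push_neg at hB
      obtain ⟨i, j, hij, hjs, hne⟩ := hB
      obtain ⟨w, hw⟩ := hne
      rw [Finset.mem_inter] at hw
      obtain ⟨b, hb⟩ : ∃ b, s = j + b := ⟨s - j, by omega⟩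
      set g' : ℕ → Finset V := fun t => if t ≤ i then g t else g (t - (i+1) + j) with hg'def
      have hg'e : ∀ t, g' t = if t ≤ i then g t else g (t - (i+1) + j) := fun _ => rfl
      have : ChainP E c VF (i+1+b) g' := by
        refine ⟨?_, ?_, ?_, ?_⟩
        · intro t ht; rw [hg'e]; split
          · exact hgE _ (by omega)
          · exact hgE _ (by omega)
        · rw [hg'e, if_pos (Nat.zero_le i)]; exact hg0
        · intro t ht
          rcases lt_trichotomy t i with h' | h' | h'
          · rw [hg'e, hg'e, if_pos (le_of_lt h'), if_pos (by omega)]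
            exact hgch t (by omega)
          · subst h'
            have hx : t + 1 - (t+1) + j = j := by omega
            rw [hg'e, hg'e, if_pos (le_refl t), if_neg (by omega), hx]
            exact ⟨w, Finset.mem_inter.mpr hw⟩
          · have hx : t + 1 - (i+1) + j = (t - (i+1) + j) + 1 := by omega
            rw [hg'e, hg'e, if_neg (by omega), if_neg (by omega), hx]
            exact hgch _ (by omega)
        · have hx : i + 1 + b - (i+1) + j = s := by omega
          rw [hg'e, if_neg (by omega), hx]
          exact hglast
      obtain ⟨s', g'', h1, h2⟩ := ih (i+1+b) (by omega) g' this
      exact ⟨s', g'', by omega, h2⟩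
  · -- restart at a later color-2 edge
    push_neg at hA
    obtain ⟨i, hi, hc⟩ := hA
    have hc' : c (g (i+1)) = false := by
      cases h : c (g (i+1)) with
      | false => rfl
      | true => exact absurd h hc
    obtain ⟨m, hm⟩ : ∃ m, s = i + 1 + m := ⟨s - (i+1), by omega⟩
    set g' : ℕ → Finset V := fun t => g (t + i + 1) with hg'def
    have hg'e : ∀ t, g' t = g (t + i + 1) := fun _ => rfl
    have : ChainP E c VF m g' := by
      refine ⟨fun t ht => hgE _ (by omega), by rw [hg'e]; simpa using hc', ?_, ?_⟩
      · intro t ht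
        rw [hg'e, hg'e]
        have hx : t + 1 + i + 1 = (t + i + 1) + 1 := by omega
        rw [hx]
        exact hgch _ (by omega)
      · have hx : m + i + 1 = s := by omega
        rw [hg'e, hx]
        exact hglast
    obtain ⟨s', g'', h1, h2⟩ := ih m (by omega) g' this
    exact ⟨s', g'', by omega, h2⟩

end chains

section ext
variable {V : Type*} [DecidableEq V]

lemma extend_step (r p : ℕ) (hr : 2 ≤ r) (hp : 2 ≤ p)
    (E : Finset (Finset V)) (hU : ∀ e ∈ E, e.card = r)
    (hlin : ∀ e ∈ E, ∀ f ∈ E, e ≠ f → (e ∩ f).card ≤ 1)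
    (c : Finset V → Bool)
    (G : Finset (Finset V)) (hGE : G ⊆ E) (hGc : ∀ f ∈ G, c f = true)
    (hmindeg : ∀ v ∈ G.biUnion id, (r-1)*(p-1) + 2 ≤ (G.filter (fun f => v ∈ f)).card)
    (t : ℕ) (e : ℕ → Finset V) (ht1 : 1 ≤ t) (htp : t < p)
    (hLP : IsLinearPath E t e)
    (v : V) (hv1 : v ∈ e (t-1)) (hv2 : v ∈ G.biUnion id) (hv3 : ∀ i < t-1, v ∉ e i) :
    ∃ e' : ℕ → Finset V, (∀ i < t, e' i = e i) ∧ IsLinearPath E (t+1) e' ∧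
      c (e' t) = true ∧
      ∃ v', v' ∈ e' t ∧ v' ∈ G.biUnion id ∧ ∀ i < t, v' ∉ e' i := by
  classical
  obtain ⟨hE, hDst, hI, hDisj⟩ := hLP
  set U : Finset V := (Finset.range t).biUnion e with hUdef
  -- union cardinality bound
  have hcardU : ∀ m, m < t → ((Finset.range (m+1)).biUnion e).card ≤ r + (r-1) * m := by
    intro m
    induction m with
    | zero =>
      intro h0
      have h00 : (Finset.range (0+1)).biUnion e = e 0 := by
        rw [Finset.range_one, Finset.singleton_biUnion]
      rw [h00, hU (e 0) (hE 0 h0)]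
      omega
    | succ m ihm =>
      intro hmt
      have ihm' := ihm (by omega)
      rw [Finset.range_add_one, Finset.biUnion_insert]
      have h1 : (e (m+1) ∪ (Finset.range (m+1)).biUnion e).card =
          (e (m+1) \ (Finset.range (m+1)).biUnion e).card +
          ((Finset.range (m+1)).biUnion e).card := by
        rw [Finset.card_sdiff_add_card]
      have hsub : e (m+1) \ (Finset.range (m+1)).biUnion e ⊆ e (m+1) \ e m := by
        apply Finset.sdiff_subset_sdiff (le_refl _)
        intro x hx
        exact Finset.mem_biUnion.mpr ⟨m, Finset.mem_range.mpr (by omega), hx⟩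
      have h2 : (e (m+1) \ e m).card = r - 1 := by
        have hi := Finset.card_inter_add_card_sdiff (e (m+1)) (e m)
        rw [hU (e (m+1)) (hE _ hmt), Finset.inter_comm, hI m (by omega)] at hi
        omega
      have h3 : (e (m+1) \ (Finset.range (m+1)).biUnion e).card ≤ r - 1 :=
        h2 ▸ Finset.card_le_card hsub
      have : (m+1) * (r-1) = m * (r-1) + (r-1) := by rw [Nat.succ_mul]
      calc (e (m+1) ∪ (Finset.range (m+1)).biUnion e).card
          ≤ (r-1) + (r + (r-1) * m) := by omega
        _ = r + (r-1) * (m+1) := by ring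
  have hUb : U.card ≤ r + (r-1) * (t-1) := by
    have := hcardU (t-1) (by omega)
    have ht : t - 1 + 1 = t := by omega
    rw [ht] at this
    exact this
  have hvU : v ∈ U := Finset.mem_biUnion.mpr ⟨t-1, Finset.mem_range.mpr (by omega), hv1⟩
  -- counting
  set D := G.filter (fun f => v ∈ f) with hDdef
  have hDd : (r-1)*(p-1) + 2 ≤ D.card := hmindeg v hv2
  set Bad := D.filter (fun f => ¬ f ∩ U ⊆ {v}) with hBaddef
  set Good := D.filter (fun f => f ∩ U ⊆ {v}) with hGooddef
  have hGB : Good.card + Bad.card = D.card :=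
    Finset.card_filter_add_card_filter_not (s := D) (p := fun f => f ∩ U ⊆ {v})
  have hwit : ∀ f : Finset V, ∃ x : V, f ∈ Bad → (x ∈ U.erase v ∧ x ∈ f) := by
    intro f
    by_cases hf : f ∈ Bad
    · rw [hBaddef, Finset.mem_filter] at hf
      obtain ⟨x, hx1, hx2⟩ := Finset.not_subset.mp hf.2
      rw [Finset.mem_inter] at hx1
      refine ⟨x, fun _ => ⟨Finset.mem_erase.mpr ⟨?_, hx1.2⟩, hx1.1⟩⟩
      simpa using hx2
    · exact ⟨v, fun h => absurd h hf⟩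
  choose φ hφ using hwit
  have hBadcard : Bad.card ≤ (U.erase v).card := by
    apply Finset.card_le_card_of_injOn φ
    · intro f hf; exact (hφ f hf).1
    · intro f1 hf1 f2 hf2 heq
      simp only [Finset.coe_mem, Finset.mem_coe] at hf1 hf2
      have h1 := hφ f1 hf1
      have h2 := hφ f2 hf2
      by_contra hne
      have hf1G : f1 ∈ E := hGE ((Finset.mem_filter.mp ((Finset.mem_filter.mp hf1).1)).1)
      have hf2G : f2 ∈ E := hGE ((Finset.mem_filter.mp ((Finset.mem_filter.mp hf2).1)).1)
      have hvf1 : v ∈ f1 := (Finset.mem_filter.mp ((Finset.mem_filter.mp hf1).1)).2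
      have hvf2 : v ∈ f2 := (Finset.mem_filter.mp ((Finset.mem_filter.mp hf2).1)).2
      have hlin12 := hlin f1 hf1G f2 hf2G hne
      have hxv : φ f1 ≠ v := (Finset.mem_erase.mp h1.1).1
      have h2' : ({v, φ f1} : Finset V) ⊆ f1 ∩ f2 := by
        intro y hy
        simp only [Finset.mem_insert, Finset.mem_singleton] at hy
        rcases hy with rfl | rfl
        · exact Finset.mem_inter.mpr ⟨hvf1, hvf2⟩
        · exact Finset.mem_inter.mpr ⟨h1.2, heq ▸ h2.2⟩
      have := Finset.card_le_card h2'
      rw [Finset.card_pair (Ne.symm hxv)] at this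
      omega
  have hBadbound : Bad.card ≤ (r-1)*(p-1) := by
    have h1 : (U.erase v).card = U.card - 1 := Finset.card_erase_of_mem hvU
    have h2 : (r-1) * (t-1) ≤ (r-1) * (p-2) := Nat.mul_le_mul_left _ (by omega)
    have h3 : (r-1)*(p-1) = (r-1)*(p-2) + (r-1) := by
      have : p - 1 = (p-2) + 1 := by omega
      rw [this, Nat.mul_succ]
    omega
  have hGoodpos : 0 < Good.card := by omega
  obtain ⟨f, hfGood⟩ := Finset.card_pos.mp hGoodpos
  rw [hGooddef, Finset.mem_filter] at hfGood
  obtain ⟨hfD, hfsub⟩ := hfGood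
  rw [hDdef, Finset.mem_filter] at hfD
  obtain ⟨hfG, hvf⟩ := hfD
  have hfE : f ∈ E := hGE hfG
  have hfcard : f.card = r := hU f hfE
  have hfint : f ∩ U = {v} := by
    apply Finset.Subset.antisymm hfsub
    intro x hx
    rw [Finset.mem_singleton] at hx
    subst hx
    exact Finset.mem_inter.mpr ⟨hvf, hvU⟩
  -- new pivot
  have hv'ex : (f.erase v).Nonempty := by
    rw [← Finset.card_pos, Finset.card_erase_of_mem hvf, hfcard]
    omega
  obtain ⟨v', hv'⟩ := hv'ex
  have hv'f : v' ∈ f := Finset.mem_of_mem_erase hv'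
  have hv'v : v' ≠ v := Finset.ne_of_mem_erase hv'
  have hv'U : v' ∉ U := by
    intro hU'
    have : v' ∈ f ∩ U := Finset.mem_inter.mpr ⟨hv'f, hU'⟩
    rw [hfint, Finset.mem_singleton] at this
    exact hv'v this
  -- intersections of f with old edges
  have hint : ∀ i, i < t - 1 → e i ∩ f = ∅ := by
    intro i hi
    rw [Finset.eq_empty_iff_forall_notMem]
    intro x hx
    rw [Finset.mem_inter] at hx
    have hxU : x ∈ U := Finset.mem_biUnion.mpr ⟨i, Finset.mem_range.mpr (by omega), hx.1⟩
    have : x ∈ f ∩ U := Finset.mem_inter.mpr ⟨hx.2, hxU⟩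
    rw [hfint, Finset.mem_singleton] at this
    subst this
    exact hv3 i hi hx.1
  have hlastint : e (t-1) ∩ f = {v} := by
    apply Finset.Subset.antisymm
    · intro x hx
      rw [Finset.mem_inter] at hx
      have hxU : x ∈ U := Finset.mem_biUnion.mpr ⟨t-1, Finset.mem_range.mpr (by omega), hx.1⟩
      have : x ∈ f ∩ U := Finset.mem_inter.mpr ⟨hx.2, hxU⟩
      rwa [hfint] at this
    · intro x hx
      rw [Finset.mem_singleton] at hx
      subst hx
      exact Finset.mem_inter.mpr ⟨hv1, hvf⟩
  -- new sequence
  set e' : ℕ → Finset V := Function.update e t f with he'def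
  have he'lt : ∀ i, i < t → e' i = e i := by
    intro i hi
    rw [he'def]
    exact Function.update_of_ne (by omega : i ≠ t) f e
  have he't : e' t = f := by
    rw [he'def]
    exact Function.update_self t f e
  have hfne : ∀ i, i < t → e i ≠ f := by
    intro i hi heqf
    rcases Nat.lt_or_ge i (t-1) with h | h
    · have := hint i h
      rw [heqf, Finset.inter_self] at this
      rw [this] at hfcard
      simp at hfcard
      omega
    · have hieq : i = t - 1 := by omega
      subst hieq
      have := hlastint
      rw [heqf, Finset.inter_self] at this
      rw [this] at hfcard
      simp at hfcard
      omega
  refine ⟨e', he'lt, ⟨?_, ?_, ?_, ?_⟩, ?_, v', ?_, ?_, ?_⟩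
  · intro i hi
    rcases Nat.lt_or_ge i t with h | h
    · rw [he'lt i h]; exact hE i h
    · have : i = t := by omega
      subst this
      rw [he't]; exact hfE
  · intro i j hij hj
    rcases Nat.lt_or_ge j t with h | h
    · rw [he'lt i (by omega), he'lt j h]; exact hDst i j hij h
    · have : j = t := by omega
      subst this
      rw [he'lt i hij, he't]
      exact hfne i hij
  · intro i hi
    rcases Nat.lt_or_ge (i+1) t with h | h
    · rw [he'lt i (by omega), he'lt (i+1) h]; exact hI i h
    · have : i + 1 = t := by omega
      have hit : i = t - 1 := by omega
      rw [he'lt i (by omega), this, he't, hit, hlastint]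
      simp
  · intro i j hij hj
    rcases Nat.lt_or_ge j t with h | h
    · rw [he'lt i (by omega), he'lt j h]; exact hDisj i j hij h
    · have : j = t := by omega
      subst this
      rw [he'lt i (by omega), he't]
      exact hint i (by omega)
  · rw [he't]; exact hGc f hfG
  · rw [he't]; exact hv'f
  · exact Finset.mem_biUnion.mpr ⟨f, hfG, hv'f⟩
  · intro i hi
    rw [he'lt i hi]
    intro hmem
    exact hv'U (Finset.mem_biUnion.mpr ⟨i, Finset.mem_range.mpr hi, hmem⟩)
end ext

/-- the special-path lemma: Let H be a connected linear r-uniform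
hypergraph (r ≥ 2), edges 2-colored (color 1 = `true`, color 2 = `false`) with at
least one edge of each color. If the color-1 subhypergraph has average degree at
least r(r−1)(p−1)+2r, then H contains a linear path of length at least p whose
first edge has color 2 and all remaining edges have color 1. -/
theorem stmt_11 {V : Type*} [Fintype V] [DecidableEq V] (r p : ℕ)
    (hr : 2 ≤ r) (hp : 2 ≤ p)
    (E : Finset (Finset V)) (hU : ∀ e ∈ E, e.card = r)
    (hlin : ∀ e ∈ E, ∀ f ∈ E, e ≠ f → (e ∩ f).card ≤ 1)
    (hconn : (shadowGraph E).Connected)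
    (c : Finset V → Bool)
    (h2 : ∃ e ∈ E, c e = false) (h1 : ∃ e ∈ E, c e = true)
    (hdeg : (r * (r - 1) * (p - 1) + 2 * r) * Fintype.card V ≤
      r * (E.filter (fun e => c e = true)).card) :
    ∃ (ℓ : ℕ) (e : ℕ → Finset V), p ≤ ℓ ∧ IsLinearPath E ℓ e ∧
      c (e 0) = false ∧ ∀ i, 1 ≤ i → i < ℓ → c (e i) = true := by
  classical
  set d : ℕ := (r-1)*(p-1) + 2 with hddef
  set E1 : Finset (Finset V) := E.filter (fun e => c e = true) with hE1def
  -- the vertex type is nonempty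
  obtain ⟨a0, ha0E, ha0c⟩ := h1
  have ha0card : a0.card = r := hU a0 ha0E
  have ha0ne : a0.Nonempty := Finset.card_pos.mp (by omega)
  have hn : 1 ≤ Fintype.card V := by
    obtain ⟨x, _⟩ := ha0ne
    exact Fintype.card_pos_iff.mpr ⟨x⟩
  -- average degree gives many color-1 edges
  have hE1card : d * Fintype.card V ≤ E1.card := by
    have hEq : r * (r-1) * (p-1) + 2 * r = r * d := by rw [hddef]; ring
    rw [hEq, mul_assoc] at hdeg
    exact Nat.le_of_mul_le_mul_left hdeg (by omega : 0 < r)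
  -- extract min-degree core G
  have hBU : (E1.biUnion id).card ≤ Fintype.card V := Finset.card_le_univ _
  have hextr : (d - 1) * (E1.biUnion id).card < E1.card := by
    have h1' : (d-1) * (E1.biUnion id).card ≤ (d-1) * Fintype.card V :=
      Nat.mul_le_mul_left _ hBU
    have h2' : (d-1) * Fintype.card V + Fintype.card V = d * Fintype.card V := by
      have : d = (d-1) + 1 := by omega
      calc (d-1) * Fintype.card V + Fintype.card V
          = ((d-1) + 1) * Fintype.card V := by ring
        _ = d * Fintype.card V := by rw [← this]
    omega
  obtain ⟨G, hGsub, hGne, hmindeg⟩ := mindeg_extract d E1 hextr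
  have hGE : G ⊆ E := hGsub.trans (Finset.filter_subset _ _)
  have hGc : ∀ f ∈ G, c f = true := by
    intro f hf
    exact (Finset.mem_filter.mp (hGsub hf)).2
  set VF : Finset V := G.biUnion id with hVFdef
  -- a chain from a color-2 edge to VF
  obtain ⟨f0, hf0E, hf0c⟩ := h2
  have hf0ne : f0.Nonempty := Finset.card_pos.mp (by rw [hU f0 hf0E]; omega)
  obtain ⟨u, hu⟩ := hf0ne
  obtain ⟨g0, hg0G⟩ := hGne
  have hg0ne : g0.Nonempty := Finset.card_pos.mp (by rw [hU g0 (hGE hg0G)]; omega)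
  obtain ⟨w, hw⟩ := hg0ne
  obtain ⟨q⟩ := hconn.preconnected u w
  obtain ⟨s, g, hgf0, hgE, hgch, hgw⟩ := chain_of_walk q f0 hf0E hu
  have hchain : ChainP E c VF s g := by
    refine ⟨hgE, by rw [hgf0]; exact hf0c, hgch, ?_⟩
    exact ⟨w, Finset.mem_inter.mpr ⟨hgw, Finset.mem_biUnion.mpr ⟨g0, hg0G, hw⟩⟩⟩
  obtain ⟨s', g', _, ⟨hg'E, hg'0, hg'ch, hg'last⟩, hP1, hP2, hP3, hP4⟩ :=
    min_chain E c VF s g hchain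
  -- base linear path of length s'+1
  have hbaseLP : IsLinearPath E (s'+1) g' := by
    refine ⟨fun i hi => hg'E i (by omega), ?_, ?_, ?_⟩
    · intro i j hij hj
      rcases Nat.lt_or_ge (i+1) j with h | h
      · intro heq
        have := hP2 i j (by omega) (by omega)
        rw [heq, Finset.inter_self] at this
        have hc := hU (g' j) (hg'E j (by omega))
        rw [this] at hc
        simp at hc
        omega
      · have : j = i + 1 := by omega
        subst this
        exact hP3 i (by omega)
    · intro i hi
      have hne := hP3 i (by omega)
      have hle := hlin (g' i) (hg'E i (by omega)) (g' (i+1)) (hg'E (i+1) (by omega)) hne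
      have hpos := hg'ch i (by omega)
      have := Finset.card_pos.mpr hpos
      omega
    · intro i j hij hj
      exact hP2 i j hij (by omega)
  have hbasecol : ∀ i, 1 ≤ i → i < s' + 1 → c (g' i) = true := by
    intro i hi1 hi2
    have : i - 1 < s' := by omega
    have := hP1 (i-1) this
    have hieq : i - 1 + 1 = i := by omega
    rwa [hieq] at this
  obtain ⟨v0, hv0⟩ := hg'last
  rw [Finset.mem_inter] at hv0
  have hbasepivot : ∀ i < (s'+1) - 1, v0 ∉ g' i := by
    intro i hi
    rcases Nat.lt_or_ge (i+1) s' with h | h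
    · intro hmem
      have := hP2 i s' (by omega) le_rfl
      have : v0 ∈ g' i ∩ g' s' := Finset.mem_inter.mpr ⟨hmem, hv0.1⟩
      rw [hP2 i s' (by omega) le_rfl] at this
      simp at this
    · have hs' : s' = i + 1 := by omega
      have := hP4 i hs'
      intro hmem
      have : v0 ∈ g' i ∩ VF := Finset.mem_inter.mpr ⟨hmem, hv0.2⟩
      rw [hP4 i hs'] at this
      simp at this
  -- iterate the extension
  have hmindeg' : ∀ v ∈ G.biUnion id, (r-1)*(p-1) + 2 ≤ (G.filter (fun f => v ∈ f)).card := by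
    intro v hv
    exact hmindeg v hv
  set t0 : ℕ := s' + 1 with ht0def
  have main : ∀ k : ℕ, ∃ (t : ℕ) (e : ℕ → Finset V), 1 ≤ t ∧ min p (t0 + k) ≤ t ∧
      IsLinearPath E t e ∧ c (e 0) = false ∧
      (∀ i, 1 ≤ i → i < t → c (e i) = true) ∧
      ∃ v, v ∈ e (t-1) ∧ v ∈ G.biUnion id ∧ ∀ i < t-1, v ∉ e i := by
    intro k
    induction k with
    | zero =>
      refine ⟨t0, g', by omega, by omega, hbaseLP, hg'0, hbasecol, v0, ?_, hv0.2, hbasepivot⟩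
      have : t0 - 1 = s' := by omega
      rw [this]
      exact hv0.1
    | succ k ihk =>
      obtain ⟨t, e, ht1, htmin, hLP, hcol0, hcol, v, hv1, hv2, hv3⟩ := ihk
      rcases Nat.lt_or_ge t p with hlt | hge
      · obtain ⟨e', he'lt, hLP', hcol't, v', hv'1, hv'2, hv'3⟩ :=
          extend_step r p hr hp E hU hlin c G hGE hGc hmindeg' t e ht1 hlt hLP v hv1 hv2 hv3
        refine ⟨t+1, e', by omega, by omega, hLP', ?_, ?_, v', ?_, hv'2, ?_⟩
        · rw [he'lt 0 (by omega)]; exact hcol0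
        · intro i hi1 hi2
          rcases Nat.lt_or_ge i t with h | h
          · rw [he'lt i h]; exact hcol i hi1 h
          · have : i = t := by omega
            subst this
            exact hcol't
        · have : t + 1 - 1 = t := by omega
          rw [this]; exact hv'1
        · intro i hi
          exact hv'3 i (by omega)
      · exact ⟨t, e, ht1, by omega, hLP, hcol0, hcol, v, hv1, hv2, hv3⟩
  obtain ⟨t, e, ht1, htmin, hLP, hcol0, hcol, _⟩ := main p
  exact ⟨t, e, by omega, hLP, hcol0, hcol⟩
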